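/- Let G(X,Y) be a balanced bipartite graph with perfect matching M = {x_i y_i : 1 ≤ i ≤ n} and let M_0 ⊆ M satisfy δ(M_0) ≥ (3n+1)/4. Then G contains ⌊|M_0|/2⌋ pairwise vertex-disjoint feasible cycles C_1, …, C_{⌊|M_0|/2⌋} with l_{M_0}(C_i) = 2 for each i. -/

import Mathlib

/-- `e(S, T)`: the number of edges of `G` with one end in `S` and the other in `T`. -/
noncomputable def eBtw {V : Type*} (G : SimpleGraph V) (S T : Set V) : ℕ :=
  {e : Sym2 V | e ∈ G.edgeSet ∧ ∃ a b, e = s(a, b) ∧ a ∈ S ∧ b ∈ T}.ncard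

/-- The set of vertices `{xᵢ, yᵢ : i ∈ F}` corresponding to a set `F` of matching
indices; here `Sum.inl i` plays the role of `xᵢ ∈ X` and `Sum.inr i` of `yᵢ ∈ Y`. -/
def iVerts {α : Type*} (F : Set α) : Set (α ⊕ α) :=
  {w | ∃ i ∈ F, w = Sum.inl i ∨ w = Sum.inr i}

/-- An `M`-alternating cycle `x_{i₁} y_{i₁} x_{i₂} y_{i₂} ⋯ x_{i_r} y_{i_r} x_{i₁}`
(where `M = {xᵢyᵢ}` is the perfect matching), encoded by its list of matching
indices `i₁, …, i_r`: consecutive (cyclically) indices are joined by the non-matching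
edges `y_{i_j} x_{i_{j+1}}`.  Such a cycle has `2 * l.length` edges, `l.length` of
which are matching edges. -/
def AltCycle {α : Type*} (G : SimpleGraph (α ⊕ α)) (l : List α) : Prop :=
  2 ≤ l.length ∧ l.Nodup ∧
    ∀ i : Fin l.length,
      G.Adj (Sum.inr (l.get i))
        (Sum.inl (l.get ⟨((i : ℕ) + 1) % l.length, Nat.mod_lt _ i.pos⟩))

/-- An `M`-alternating path `x_{i₁} y_{i₁} ⋯ x_{i_r} y_{i_r}` beginning and ending
with matching edges, encoded by its list of matching indices. -/
def AltPath {α : Type*} (G : SimpleGraph (α ⊕ α)) (l : List α) : Prop :=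
  l ≠ [] ∧ l.Nodup ∧ l.Chain' (fun a b => G.Adj (Sum.inr a) (Sum.inl b))

/-- A feasible path: an `M`-alternating path `x_{i₁} y_{i₁} ⋯ x_{i_r} y_{i_r}` whose
end-vertices `x_{i₁}` and `y_{i_r}` belong to `V(M₀)`, where `S` is the index set of
`M₀ ⊆ M`. -/
def FeasPath {α : Type*} [DecidableEq α] (G : SimpleGraph (α ⊕ α)) (S : Finset α)
    (l : List α) : Prop :=
  AltPath G l ∧ ∀ h : l ≠ [], l.head h ∈ S ∧ l.getLast h ∈ S



set_option linter.unusedSectionVars false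
set_option maxHeartbeats 1000000
open scoped Classical
open Finset

section Stage1Aux
variable {α : Type*} [Fintype α] [DecidableEq α]
variable (R : α → α → Prop) (S : Finset α)

def PSys (M : Finset (α × α)) : Prop :=
  (∀ p ∈ M, p.1 ∈ S ∧ p.2 ∈ S ∧ R p.1 p.2 ∧ R p.2 p.1 ∧ p.1 ≠ p.2) ∧
  (∀ p ∈ M, ∀ r ∈ M, p ≠ r → p.1 ≠ r.1 ∧ p.1 ≠ r.2 ∧ p.2 ≠ r.1 ∧ p.2 ≠ r.2)

def msup (M : Finset (α × α)) : Finset α := M.biUnion fun p => {p.1, p.2}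

lemma mem_msup {M : Finset (α × α)} {a : α} :
    a ∈ msup M ↔ ∃ p ∈ M, a = p.1 ∨ a = p.2 := by
  simp [msup, mem_biUnion, eq_comm]

lemma msup_subset {M : Finset (α × α)} (h : PSys R S M) : msup M ⊆ S := by
  intro a ha
  rw [mem_msup] at ha
  obtain ⟨p, hp, hap⟩ := ha
  rcases hap with h1 | h2
  · exact h1 ▸ (h.1 p hp).1
  · exact h2 ▸ (h.1 p hp).2.1

lemma card_msup {M : Finset (α × α)} (h : PSys R S M) : (msup M).card = 2 * M.card := by
  rw [msup, card_biUnion]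
  · rw [Finset.sum_congr rfl (fun p hp => ?_), Finset.sum_const, smul_eq_mul, mul_comm]
    exact card_pair (h.1 p hp).2.2.2.2
  · intro p hp r hr hpr
    have h4 := h.2 p hp r hr hpr
    simp only [Finset.disjoint_left, mem_insert, mem_singleton]
    rintro x (rfl | rfl) (h' | h') <;> simp_all

lemma two_of_three {X Y : Finset α} {c d : α} (hcd : c ≠ d) (hX : X ⊆ {c, d}) (hY : Y ⊆ {c, d})
    (h3 : 3 ≤ X.card + Y.card) : (c ∈ X ∧ d ∈ Y) ∨ (d ∈ X ∧ c ∈ Y) := by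
  have hcd2 : ({c, d} : Finset α).card = 2 := card_pair hcd
  have hX2 : X.card ≤ 2 := hcd2 ▸ card_le_card hX
  have hY2 : Y.card ≤ 2 := hcd2 ▸ card_le_card hY
  rcases (by omega : 2 ≤ X.card ∨ 2 ≤ Y.card) with h | h
  · have hXe : X = {c, d} := eq_of_subset_of_card_le hX (by omega)
    have hYne : Y.Nonempty := card_pos.1 (by omega)
    obtain ⟨e, he⟩ := hYne
    rcases mem_insert.1 (hY he) with rfl | he'
    · exact Or.inr ⟨by simp [hXe], he⟩
    · rw [mem_singleton] at he'
      subst he'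
      exact Or.inl ⟨by simp [hXe], he⟩
  · have hYe : Y = {c, d} := eq_of_subset_of_card_le hY (by omega)
    have hXne : X.Nonempty := card_pos.1 (by omega)
    obtain ⟨e, he⟩ := hXne
    rcases mem_insert.1 (hX he) with rfl | he'
    · exact Or.inl ⟨he, by simp [hYe]⟩
    · rw [mem_singleton] at he'
      subst he'
      exact Or.inr ⟨he, by simp [hYe]⟩

lemma stage1 (hrefl : ∀ a, R a a) :
    ∃ M : Finset (α × α), PSys R S M ∧
      ∀ a ∈ S \ msup M, ∀ b ∈ S \ msup M, a ≠ b →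
        (2 * S.card ≤ 2 * M.card + 2 +
          (((S.filter fun c => ¬ R a c).card + (S.filter fun c => ¬ R c a).card) +
           ((S.filter fun c => ¬ R b c).card + (S.filter fun c => ¬ R c b).card))) ∧
        (¬ R a b → ¬ R b a → 2 * S.card + 2 ≤ 2 * M.card + 2 +
          (((S.filter fun c => ¬ R a c).card + (S.filter fun c => ¬ R c a).card) +
           ((S.filter fun c => ¬ R b c).card + (S.filter fun c => ¬ R c b).card))) := by
  classical
  set P : Finset (Finset (α × α)) := Finset.univ.filter (fun M => PSys R S M) with hP
  have hne : P.Nonempty := ⟨∅, by simp [hP, PSys]⟩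
  obtain ⟨M, hMP, hmax⟩ := P.exists_max_image (fun M => M.card) hne
  have hM : PSys R S M := by simpa [hP] using hMP
  have hmax' : ∀ M' : Finset (α × α), PSys R S M' → M'.card ≤ M.card := by
    intro M' h'
    exact hmax M' (by simpa [hP] using h')
  refine ⟨M, hM, ?_⟩
  intro a ha b hb hab
  rw [mem_sdiff] at ha hb
  -- NH sets
  set NH : α → Finset α := fun x => S.filter (fun c => c ≠ x ∧ R x c ∧ R c x) with hNH
  -- Step A
  have stepA : ∀ x, x ∈ S → x ∉ msup M → ∀ c ∈ NH x, c ∈ msup M := by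
    intro x hxS hxsup c hc
    by_contra hcsup
    simp only [hNH, mem_filter] at hc
    obtain ⟨hcS, hcx, hxc, hcx'⟩ := hc
    have hnotmem : (x, c) ∉ M := fun hmem => hxsup (mem_msup.2 ⟨(x, c), hmem, Or.inl rfl⟩)
    have hval : PSys R S (insert (x, c) M) := by
      constructor
      · intro p hp
        rcases mem_insert.1 hp with rfl | hp'
        · exact ⟨hxS, hcS, hxc, hcx', (Ne.symm hcx)⟩
        · exact hM.1 p hp'
      · intro p hp r hr hpr
        have hcomp : ∀ q ∈ M, x ≠ q.1 ∧ x ≠ q.2 ∧ c ≠ q.1 ∧ c ≠ q.2 := by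
          intro q hq
          refine ⟨?_, ?_, ?_, ?_⟩ <;>
            (intro heq; first
              | exact hxsup (mem_msup.2 ⟨q, hq, Or.inl heq⟩)
              | exact hxsup (mem_msup.2 ⟨q, hq, Or.inr heq⟩)
              | exact hcsup (mem_msup.2 ⟨q, hq, Or.inl heq⟩)
              | exact hcsup (mem_msup.2 ⟨q, hq, Or.inr heq⟩))
        rcases mem_insert.1 hp with rfl | hp'
        · rcases mem_insert.1 hr with rfl | hr'
          · exact absurd rfl hpr
          · exact hcomp r hr'
        · rcases mem_insert.1 hr with rfl | hr'
          · obtain ⟨h1, h2, h3, h4⟩ := hcomp p hp'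
            exact ⟨h1.symm, h3.symm, h2.symm, h4.symm⟩
          · exact hM.2 p hp' r hr' hpr
    have := hmax' _ hval
    rw [card_insert_of_notMem hnotmem] at this
    omega
  have hnotin : ∀ x, x ∉ msup M → ∀ q ∈ M, x ≠ q.1 ∧ x ≠ q.2 := by
    intro x hx q hq
    exact ⟨fun h => hx (mem_msup.2 ⟨q, hq, Or.inl h⟩), fun h => hx (mem_msup.2 ⟨q, hq, Or.inr h⟩)⟩
  have stepB : ∀ p ∈ M, ∀ c d : α, ((c = p.1 ∧ d = p.2) ∨ (c = p.2 ∧ d = p.1)) →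
      c ∈ NH a → d ∈ NH b → False := by
    intro p hp c d hcd hc hd
    simp only [hNH, mem_filter] at hc hd
    obtain ⟨hcS, hca, hac, hca'⟩ := hc
    obtain ⟨hdS, hdb, hbd, hdb'⟩ := hd
    have hcsup : c ∈ msup M := mem_msup.2 ⟨p, hp, by tauto⟩
    have hdsup : d ∈ msup M := mem_msup.2 ⟨p, hp, by tauto⟩
    have hcdne : c ≠ d := by
      have := (hM.1 p hp).2.2.2.2
      rcases hcd with ⟨rfl, rfl⟩ | ⟨rfl, rfl⟩
      · exact this
      · exact this.symm
    have hbd2 : (b, d) ∉ M.erase p := by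
      intro hmem
      exact hb.2 (mem_msup.2 ⟨(b, d), mem_of_mem_erase hmem, Or.inl rfl⟩)
    have hac2 : (a, c) ∉ insert (b, d) (M.erase p) := by
      intro hmem
      rcases mem_insert.1 hmem with heq | hmem'
      · exact hab (congrArg Prod.fst heq)
      · exact ha.2 (mem_msup.2 ⟨(a, c), mem_of_mem_erase hmem', Or.inl rfl⟩)
    have hcompE : ∀ q ∈ M.erase p,
        (q.1 ≠ a ∧ q.1 ≠ b ∧ q.1 ≠ c ∧ q.1 ≠ d) ∧ (q.2 ≠ a ∧ q.2 ≠ b ∧ q.2 ≠ c ∧ q.2 ≠ d) := by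
      intro q hq
      obtain ⟨hqp, hqM⟩ := mem_erase.1 hq
      have h1 := hnotin a ha.2 q hqM
      have h2 := hnotin b hb.2 q hqM
      have h3 := hM.2 q hqM p hp hqp
      rcases hcd with ⟨rfl, rfl⟩ | ⟨rfl, rfl⟩ <;>
        exact ⟨⟨h1.1.symm, h2.1.symm, by tauto, by tauto⟩, ⟨h1.2.symm, h2.2.symm, by tauto, by tauto⟩⟩
    have hacne : a ≠ c := fun h => ha.2 (by rw [h]; exact hcsup)
    have hadne : a ≠ d := fun h => ha.2 (by rw [h]; exact hdsup)
    have hbcne : b ≠ c := fun h => hb.2 (by rw [h]; exact hcsup)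
    have hbdne : b ≠ d := fun h => hb.2 (by rw [h]; exact hdsup)
    have hval : PSys R S (insert (a, c) (insert (b, d) (M.erase p))) := by
      constructor
      · intro r hr
        rcases mem_insert.1 hr with rfl | hr'
        · exact ⟨ha.1, hcS, hac, hca', hacne⟩
        · rcases mem_insert.1 hr' with rfl | hr''
          · exact ⟨hb.1, hdS, hbd, hdb', hbdne⟩
          · exact hM.1 r (mem_of_mem_erase hr'')
      · intro r hr r' hr' hrr'
        rcases mem_insert.1 hr with rfl | hr2
        · rcases mem_insert.1 hr' with rfl | hr'2
          · exact absurd rfl hrr'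
          · rcases mem_insert.1 hr'2 with rfl | hr'3
            · exact ⟨hab, hadne, hbcne.symm, hcdne⟩
            · obtain ⟨q1, q2⟩ := hcompE r' hr'3
              exact ⟨q1.1.symm, q2.1.symm, q1.2.2.1.symm, q2.2.2.1.symm⟩
        · rcases mem_insert.1 hr2 with rfl | hr3
          · rcases mem_insert.1 hr' with rfl | hr'2
            · exact ⟨hab.symm, hbcne, hadne.symm, hcdne.symm⟩
            · rcases mem_insert.1 hr'2 with rfl | hr'3
              · exact absurd rfl hrr'
              · obtain ⟨q1, q2⟩ := hcompE r' hr'3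
                exact ⟨q1.2.1.symm, q2.2.1.symm, q1.2.2.2.symm, q2.2.2.2.symm⟩
          · rcases mem_insert.1 hr' with rfl | hr'2
            · obtain ⟨q1, q2⟩ := hcompE r hr3
              exact ⟨q1.1, q1.2.2.1, q2.1, q2.2.2.1⟩
            · rcases mem_insert.1 hr'2 with rfl | hr'3
              · obtain ⟨q1, q2⟩ := hcompE r hr3
                exact ⟨q1.2.1, q1.2.2.2, q2.2.1, q2.2.2.2⟩
              · exact hM.2 r (mem_of_mem_erase hr3) r' (mem_of_mem_erase hr'3) hrr'
    have hcard := hmax' _ hval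
    rw [card_insert_of_notMem hac2, card_insert_of_notMem hbd2,
      card_erase_of_mem hp] at hcard
    have hMpos : 1 ≤ M.card := card_pos.2 ⟨p, hp⟩
    omega
  have stepC : ∀ p ∈ M,
      (NH a ∩ {p.1, p.2}).card + (NH b ∩ {p.1, p.2}).card ≤ 2 := by
    intro p hp
    by_contra hcon
    push_neg at hcon
    have h3 : 3 ≤ (NH a ∩ {p.1, p.2}).card + (NH b ∩ {p.1, p.2}).card := hcon
    rcases two_of_three (hM.1 p hp).2.2.2.2 inter_subset_right inter_subset_right h3 with
      ⟨h1, h2⟩ | ⟨h1, h2⟩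
    · exact stepB p hp p.1 p.2 (Or.inl ⟨rfl, rfl⟩) (mem_of_mem_inter_left h1)
        (mem_of_mem_inter_left h2)
    · exact stepB p hp p.2 p.1 (Or.inr ⟨rfl, rfl⟩) (mem_of_mem_inter_left h1)
        (mem_of_mem_inter_left h2)
  have hdisjpairs : ∀ p ∈ M, ∀ r ∈ M, p ≠ r →
      Disjoint ({p.1, p.2} : Finset α) {r.1, r.2} := by
    intro p hp r hr hpr
    have h4 := hM.2 p hp r hr hpr
    simp only [Finset.disjoint_left, mem_insert, mem_singleton]
    rintro x (rfl | rfl) (h' | h') <;> simp_all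
  have hdecomp : ∀ x, x ∈ S → x ∉ msup M →
      (NH x).card = ∑ p ∈ M, (NH x ∩ {p.1, p.2}).card := by
    intro x hx hxs
    have : NH x = M.biUnion (fun p => NH x ∩ {p.1, p.2}) := by
      ext c
      simp only [mem_biUnion, mem_inter]
      constructor
      · intro hc
        have hcs := stepA x hx hxs c hc
        rw [mem_msup] at hcs
        obtain ⟨p, hp, hcp⟩ := hcs
        exact ⟨p, hp, hc, by rcases hcp with rfl | rfl <;> simp⟩
      · rintro ⟨p, _, hc, _⟩
        exact hc
    rw [show (NH x).card = (M.biUnion fun p => NH x ∩ {p.1, p.2}).card from by rw [← this]]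
    exact card_biUnion (fun p hp r hr hpr =>
      disjoint_of_subset_left inter_subset_right
        (disjoint_of_subset_right inter_subset_right (hdisjpairs p hp r hr hpr)))
  have stepD : (NH a).card + (NH b).card ≤ 2 * M.card := by
    rw [hdecomp a ha.1 ha.2, hdecomp b hb.1 hb.2, ← Finset.sum_add_distrib]
    calc ∑ p ∈ M, ((NH a ∩ {p.1, p.2}).card + (NH b ∩ {p.1, p.2}).card)
        ≤ ∑ _p ∈ M, 2 := Finset.sum_le_sum stepC
      _ = 2 * M.card := by rw [Finset.sum_const, smul_eq_mul, mul_comm]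
  have stepE : ∀ x, x ∈ S →
      (NH x).card + ((S.filter fun c => ¬ R x c) ∪ (S.filter fun c => ¬ R c x)).card + 1
        = S.card := by
    intro x hx
    have hpart : S.erase x = NH x ∪ ((S.filter fun c => ¬ R x c) ∪ (S.filter fun c => ¬ R c x)) := by
      ext c
      simp only [mem_erase, hNH, mem_union, mem_filter]
      constructor
      · rintro ⟨hcx, hcS⟩
        by_cases h1 : R x c
        · by_cases h2 : R c x
          · exact Or.inl ⟨hcS, hcx, h1, h2⟩
          · exact Or.inr (Or.inr ⟨hcS, h2⟩)
        · exact Or.inr (Or.inl ⟨hcS, h1⟩)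
      · rintro (⟨hcS, hcx, _⟩ | ⟨hcS, h1⟩ | ⟨hcS, h1⟩)
        · exact ⟨hcx, hcS⟩
        · exact ⟨fun h => h1 (h ▸ hrefl x), hcS⟩
        · exact ⟨fun h => h1 (h ▸ hrefl x), hcS⟩
    have hdisj : Disjoint (NH x)
        ((S.filter fun c => ¬ R x c) ∪ (S.filter fun c => ¬ R c x)) := by
      simp only [Finset.disjoint_left, hNH, mem_filter, mem_union]
      rintro c ⟨_, _, h1, h2⟩ (⟨_, h⟩ | ⟨_, h⟩)
      · exact h h1
      · exact h h2
    have := card_erase_add_one hx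
    rw [hpart, card_union_of_disjoint hdisj] at this
    omega
  have hABa := stepE a ha.1
  have hABb := stepE b hb.1
  have hua := card_union_add_card_inter (S.filter fun c => ¬ R a c) (S.filter fun c => ¬ R c a)
  have hub := card_union_add_card_inter (S.filter fun c => ¬ R b c) (S.filter fun c => ¬ R c b)
  constructor
  · omega
  · intro h1 h2
    have hba : b ∈ (S.filter fun c => ¬ R a c) ∩ (S.filter fun c => ¬ R c a) := by
      simp only [mem_inter, mem_filter]
      exact ⟨⟨hb.1, h1⟩, ⟨hb.1, h2⟩⟩
    have hba' : a ∈ (S.filter fun c => ¬ R b c) ∩ (S.filter fun c => ¬ R c b) := by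
      simp only [mem_inter, mem_filter]
      exact ⟨⟨ha.1, h2⟩, ⟨ha.1, h1⟩⟩
    have c1 : 1 ≤ ((S.filter fun c => ¬ R a c) ∩ (S.filter fun c => ¬ R c a)).card :=
      card_pos.2 ⟨b, hba⟩
    have c2 : 1 ≤ ((S.filter fun c => ¬ R b c) ∩ (S.filter fun c => ¬ R c b)).card :=
      card_pos.2 ⟨a, hba'⟩
    omega

end Stage1Aux

section Stage2Aux
variable {n : ℕ} (G : SimpleGraph (Fin n ⊕ Fin n))

lemma deg_out (hY : ∀ i j : Fin n, ¬ G.Adj (Sum.inr i) (Sum.inr j)) (a : Fin n)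
    (h : (3 * (n : ℚ) + 1) / 4 ≤ ((G.neighborSet (Sum.inr a)).ncard : ℚ)) :
    3 * n + 1 ≤ 4 * (Finset.univ.filter (fun c => G.Adj (Sum.inr a) (Sum.inl c))).card := by
  have hset : G.neighborSet (Sum.inr a) = Sum.inl '' {c | G.Adj (Sum.inr a) (Sum.inl c)} := by
    ext v
    cases v with
    | inl c => simp [SimpleGraph.mem_neighborSet]
    | inr c => simp [SimpleGraph.mem_neighborSet, hY a c]
  have hcard : (G.neighborSet (Sum.inr a)).ncard
      = (Finset.univ.filter (fun c => G.Adj (Sum.inr a) (Sum.inl c))).card := by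
    rw [hset, Set.ncard_image_of_injective _ Sum.inl_injective]
    rw [← Set.ncard_coe_finset]
    congr 1
    ext c
    simp
  rw [hcard] at h
  have h4 : (3 * (n : ℚ) + 1) ≤ 4 * ((Finset.univ.filter (fun c => G.Adj (Sum.inr a) (Sum.inl c))).card : ℚ) := by
    linarith
  exact_mod_cast h4

lemma deg_in (hX : ∀ i j : Fin n, ¬ G.Adj (Sum.inl i) (Sum.inl j)) (a : Fin n)
    (h : (3 * (n : ℚ) + 1) / 4 ≤ ((G.neighborSet (Sum.inl a)).ncard : ℚ)) :
    3 * n + 1 ≤ 4 * (Finset.univ.filter (fun c => G.Adj (Sum.inr c) (Sum.inl a))).card := by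
  have hset : G.neighborSet (Sum.inl a) = Sum.inr '' {c | G.Adj (Sum.inr c) (Sum.inl a)} := by
    ext v
    cases v with
    | inl c => simp [SimpleGraph.mem_neighborSet, hX a c]
    | inr c => simp [SimpleGraph.mem_neighborSet, SimpleGraph.adj_comm]
  have hcard : (G.neighborSet (Sum.inl a)).ncard
      = (Finset.univ.filter (fun c => G.Adj (Sum.inr c) (Sum.inl a))).card := by
    rw [hset, Set.ncard_image_of_injective _ Sum.inr_injective]
    rw [← Set.ncard_coe_finset]
    congr 1
    ext c
    simp
  rw [hcard] at h
  have h4 : (3 * (n : ℚ) + 1) ≤ 4 * ((Finset.univ.filter (fun c => G.Adj (Sum.inr c) (Sum.inl a))).card : ℚ) := by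
    linarith
  exact_mod_cast h4
def Rl (a b : Fin n) : Prop := G.Adj (Sum.inr a) (Sum.inl b)

lemma altCycle_pair {a b : Fin n} (hab : a ≠ b) (h1 : Rl G a b) (h2 : Rl G b a) :
    AltCycle G [a, b] := by
  refine ⟨by simp, by simp [hab], ?_⟩
  intro i
  fin_cases i <;> simpa [Rl] using by assumption

lemma altCycle_tri {a b w : Fin n} (hab : a ≠ b) (haw : a ≠ w) (hbw : b ≠ w)
    (h1 : Rl G a b) (h2 : Rl G b w) (h3 : Rl G w a) :
    AltCycle G [a, b, w] := by
  refine ⟨by simp, by simp [hab, haw, hbw], ?_⟩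
  intro i
  fin_cases i
  · simpa [Rl] using h1
  · simpa [Rl] using h2
  · simpa [Rl] using h3

lemma altCycle_quad {a w b w' : Fin n} (hab : a ≠ b) (haw : a ≠ w) (haw' : a ≠ w')
    (hbw : b ≠ w) (hbw' : b ≠ w') (hww' : w ≠ w')
    (h1 : Rl G a w) (h2 : Rl G w b) (h3 : Rl G b w') (h4 : Rl G w' a) :
    AltCycle G [a, w, b, w'] := by
  refine ⟨by simp, by simp [hab, haw, haw', hbw, hbw', hww', hbw.symm, hww'.symm, haw.symm], ?_⟩
  intro i
  fin_cases i
  · simpa [Rl] using h1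
  · simpa [Rl] using h2
  · simpa [Rl] using h3
  · simpa [Rl] using h4

lemma pool_count (S : Finset (Fin n)) (x y : Fin n) (F' : Finset (Fin n))
    (hF'S : ∀ w ∈ F', w ∉ S) :
    F'.card + (S.filter fun c => ¬ Rl G x c).card + (S.filter fun c => ¬ Rl G c y).card
      ≤ (F'.filter fun w => Rl G x w ∧ Rl G w y).card
        + (univ.filter fun c => ¬ Rl G x c).card + (univ.filter fun c => ¬ Rl G c y).card := by
  have hsub : F' ⊆ (F'.filter fun w => Rl G x w ∧ Rl G w y)
      ∪ ((F'.filter fun w => ¬ Rl G x w) ∪ (F'.filter fun w => ¬ Rl G w y)) := by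
    intro w hw
    simp only [mem_union, mem_filter]
    by_cases h1 : Rl G x w
    · by_cases h2 : Rl G w y
      · exact Or.inl ⟨hw, h1, h2⟩
      · exact Or.inr (Or.inr ⟨hw, h2⟩)
    · exact Or.inr (Or.inl ⟨hw, h1⟩)
  have h1 : F'.card ≤ (F'.filter fun w => Rl G x w ∧ Rl G w y).card
      + ((F'.filter fun w => ¬ Rl G x w).card + (F'.filter fun w => ¬ Rl G w y).card) := by
    calc F'.card ≤ _ := card_le_card hsub
      _ ≤ _ := (card_union_le _ _).trans (by gcongr; exact card_union_le _ _)
  have h2 : (F'.filter fun w => ¬ Rl G x w).card + (S.filter fun c => ¬ Rl G x c).card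
      ≤ (univ.filter fun c => ¬ Rl G x c).card := by
    rw [← card_union_of_disjoint]
    · apply card_le_card
      intro w hw
      simp only [mem_union, mem_filter] at hw ⊢
      rcases hw with ⟨_, h⟩ | ⟨_, h⟩ <;> exact ⟨mem_univ w, h⟩
    · simp only [Finset.disjoint_left, mem_filter]
      rintro w ⟨hwF, -⟩ ⟨hwS, -⟩
      exact hF'S w hwF hwS
  have h3 : (F'.filter fun w => ¬ Rl G w y).card + (S.filter fun c => ¬ Rl G c y).card
      ≤ (univ.filter fun c => ¬ Rl G c y).card := by
    rw [← card_union_of_disjoint]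
    · apply card_le_card
      intro w hw
      simp only [mem_union, mem_filter] at hw ⊢
      rcases hw with ⟨_, h⟩ | ⟨_, h⟩ <;> exact ⟨mem_univ w, h⟩
    · simp only [Finset.disjoint_left, mem_filter]
      rintro w ⟨hwF, -⟩ ⟨hwS, -⟩
      exact hF'S w hwF hwS
  omega

lemma stage2 (S : Finset (Fin n))
    (hdegOut : ∀ a ∈ S, 4 * (univ.filter fun c => ¬ Rl G a c).card + 1 ≤ n)
    (hdegIn : ∀ a ∈ S, 4 * (univ.filter fun c => ¬ Rl G c a).card + 1 ≤ n)
    (u0 : ℕ) :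
    ∀ (m : ℕ) (U W : Finset (Fin n)), U.card ≤ m → U ⊆ S → (∀ w ∈ W, w ∉ S) →
    (∀ a ∈ U, ∀ b ∈ U, a ≠ b → S.card + u0 ≤ 2 +
      ((S.filter fun c => ¬ Rl G a c).card + (S.filter fun c => ¬ Rl G c a).card +
       (S.filter fun c => ¬ Rl G b c).card + (S.filter fun c => ¬ Rl G c b).card)) →
    (∀ a ∈ U, ∀ b ∈ U, a ≠ b → ¬ Rl G a b → ¬ Rl G b a → S.card + u0 ≤
      ((S.filter fun c => ¬ Rl G a c).card + (S.filter fun c => ¬ Rl G c a).card +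
       (S.filter fun c => ¬ Rl G b c).card + (S.filter fun c => ¬ Rl G c b).card)) →
    W.card + U.card ≤ u0 →
    ∃ L : List (List (Fin n)),
      L.length = U.card / 2 ∧
      (∀ l ∈ L, AltCycle G l) ∧
      (∀ l ∈ L, ((l.toFinset ∩ S).card = 2)) ∧
      List.Pairwise (fun l1 l2 => ∀ x ∈ l1, x ∉ l2) L ∧
      (∀ l ∈ L, ∀ x ∈ l, x ∈ U ∨ (x ∉ S ∧ x ∉ W)) := by
  intro m
  induction m with
  | zero =>
    intro U W hUm _ _ _ _ _
    have : U.card = 0 := by omega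
    exact ⟨[], by simp [this], by simp, by simp, by simp, by simp⟩
  | succ m ih =>
    intro U W hUm hUS hWS hI1 hI1' hI2
    by_cases hU1 : U.card ≤ 1
    · have : U.card / 2 = 0 := by omega
      exact ⟨[], by simp [this], by simp, by simp, by simp, by simp⟩
    push_neg at hU1
    obtain ⟨a, ha, b, hb, hab⟩ := Finset.one_lt_card.1 hU1
    have haS : a ∈ S := hUS ha
    have hbS : b ∈ S := hUS hb
    set F' : Finset (Fin n) := (univ \ S) \ W with hF'def
    have hF'S : ∀ w ∈ F', w ∉ S := by
      intro w hw
      simp only [hF'def, mem_sdiff, mem_univ] at hw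
      exact hw.1.2
    have hF'W : ∀ w ∈ F', w ∉ W := by
      intro w hw
      simp only [hF'def, mem_sdiff] at hw
      exact hw.2
    have hcardsum : F'.card + W.card + S.card = n := by
      have hdisj1 : Disjoint F' (W ∪ S) := by
        simp only [Finset.disjoint_left, mem_union]
        rintro w hw (h | h)
        · exact hF'W w hw h
        · exact hF'S w hw h
      have hdisj2 : Disjoint W S := by
        simp only [Finset.disjoint_left]
        exact fun w hw => hWS w hw
      have huniv : F' ∪ (W ∪ S) = univ := by
        ext w
        simp only [hF'def, mem_union, mem_sdiff, mem_univ, iff_true]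
        tauto
      have := congrArg Finset.card huniv
      rw [card_union_of_disjoint hdisj1, card_union_of_disjoint hdisj2, card_univ,
        Fintype.card_fin] at this
      omega
    -- pool bounds
    have hgen : ∀ x y : Fin n, x ∈ S → y ∈ S →
        (S.card + u0 ≤ 2 +
          ((S.filter fun c => ¬ Rl G x c).card + (S.filter fun c => ¬ Rl G c x).card +
           (S.filter fun c => ¬ Rl G y c).card + (S.filter fun c => ¬ Rl G c y).card)) →
        U.card ≤ (F'.filter fun w => Rl G x w ∧ Rl G w y).card + 1 := by
      intro x y hxS hyS hineq
      have pc := pool_count G S x y F' hF'S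
      have o1 := hdegOut x hxS
      have o2 := hdegIn y hyS
      have o3 : 4 * (S.filter fun c => ¬ Rl G c x).card + 1 ≤ n := by
        have := card_le_card (filter_subset_filter (fun c => ¬ Rl G c x) (subset_univ S))
        have := hdegIn x hxS
        omega
      have o4 : 4 * (S.filter fun c => ¬ Rl G y c).card + 1 ≤ n := by
        have := card_le_card (filter_subset_filter (fun c => ¬ Rl G y c) (subset_univ S))
        have := hdegOut y hyS
        omega
      omega
    have hgen' : ∀ x y : Fin n, x ∈ S → y ∈ S →
        (S.card + u0 ≤
          ((S.filter fun c => ¬ Rl G x c).card + (S.filter fun c => ¬ Rl G c x).card +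
           (S.filter fun c => ¬ Rl G y c).card + (S.filter fun c => ¬ Rl G c y).card)) →
        U.card + 1 ≤ (F'.filter fun w => Rl G x w ∧ Rl G w y).card := by
      intro x y hxS hyS hineq
      have pc := pool_count G S x y F' hF'S
      have o1 := hdegOut x hxS
      have o2 := hdegIn y hyS
      have o3 : 4 * (S.filter fun c => ¬ Rl G c x).card + 1 ≤ n := by
        have := card_le_card (filter_subset_filter (fun c => ¬ Rl G c x) (subset_univ S))
        have := hdegIn x hxS
        omega
      have o4 : 4 * (S.filter fun c => ¬ Rl G y c).card + 1 ≤ n := by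
        have := card_le_card (filter_subset_filter (fun c => ¬ Rl G y c) (subset_univ S))
        have := hdegOut y hyS
        omega
      omega
    have hpool_ab : U.card ≤ (F'.filter fun w => Rl G a w ∧ Rl G w b).card + 1 :=
      hgen a b haS hbS (by have := hI1 a ha b hb hab; omega)
    have hpool_ba : U.card ≤ (F'.filter fun w => Rl G b w ∧ Rl G w a).card + 1 :=
      hgen b a hbS haS (by have := hI1 a ha b hb hab; omega)
    have hpool'_ab : ¬ Rl G a b → ¬ Rl G b a →
        U.card + 1 ≤ (F'.filter fun w => Rl G a w ∧ Rl G w b).card := fun h1 h2 =>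
      hgen' a b haS hbS (by have := hI1' a ha b hb hab h1 h2; omega)
    have hpool'_ba : ¬ Rl G a b → ¬ Rl G b a →
        U.card + 1 ≤ (F'.filter fun w => Rl G b w ∧ Rl G w a).card := fun h1 h2 =>
      hgen' b a hbS haS (by have := hI1' a ha b hb hab h1 h2; omega)
    -- the finishing move
    set U' : Finset (Fin n) := (U.erase a).erase b with hU'def
    have hU'sub : U' ⊆ U := fun x hx => mem_of_mem_erase (mem_of_mem_erase hx)
    have haU' : a ∉ U' := by simp [hU'def, hab]
    have hbU' : b ∉ U' := by simp [hU'def]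
    have hU'card : U'.card + 2 = U.card := by
      rw [hU'def, card_erase_of_mem, card_erase_of_mem ha]
      · omega
      · exact mem_erase.2 ⟨hab.symm, hb⟩
    have finish : ∀ (l : List (Fin n)) (W' : Finset (Fin n)),
        AltCycle G l →
        l.toFinset ∩ S = {a, b} →
        (∀ x ∈ l, x ∈ U ∨ (x ∉ S ∧ x ∉ W)) →
        (∀ x ∈ l, x = a ∨ x = b ∨ (x ∉ S ∧ x ∈ W')) →
        (∀ w ∈ W', w ∉ S) →
        W ⊆ W' →
        W'.card + U.card ≤ u0 + 2 →
        ∃ L : List (List (Fin n)),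
          L.length = U.card / 2 ∧
          (∀ l ∈ L, AltCycle G l) ∧
          (∀ l ∈ L, ((l.toFinset ∩ S).card = 2)) ∧
          List.Pairwise (fun l1 l2 => ∀ x ∈ l1, x ∉ l2) L ∧
          (∀ l ∈ L, ∀ x ∈ l, x ∈ U ∨ (x ∉ S ∧ x ∉ W)) := by
      intro l W' hl hlS hmemU hcov hW'S hWW' hW'card
      obtain ⟨L', hlen, hAC, hS2, hpw, hmem'⟩ := ih U' W' (by omega) (hU'sub.trans hUS) hW'S
        (fun x hx y hy hxy => hI1 x (hU'sub hx) y (hU'sub hy) hxy)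
        (fun x hx y hy hxy h1 h2 => hI1' x (hU'sub hx) y (hU'sub hy) hxy h1 h2)
        (by omega)
      refine ⟨l :: L', ?_, ?_, ?_, ?_, ?_⟩
      · simp only [List.length_cons, hlen]
        omega
      · intro l' hl'
        rcases List.mem_cons.1 hl' with rfl | h
        · exact hl
        · exact hAC _ h
      · intro l' hl'
        rcases List.mem_cons.1 hl' with rfl | h
        · rw [hlS]
          exact card_pair hab
        · exact hS2 _ h
      · rw [List.pairwise_cons]
        refine ⟨?_, hpw⟩
        intro l' hl' x hx hxl'
        have hx' := hmem' l' hl' x hxl'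
        rcases hcov x hx with rfl | rfl | ⟨hxS, hxW'⟩
        · rcases hx' with h | h
          · exact haU' h
          · exact h.1 haS
        · rcases hx' with h | h
          · exact hbU' h
          · exact h.1 hbS
        · rcases hx' with h | h
          · exact hxS (hUS (hU'sub h))
          · exact h.2 hxW'
      · intro l' hl' x hx
        rcases List.mem_cons.1 hl' with rfl | h
        · exact hmemU x hx
        · rcases hmem' l' h x hx with h' | h'
          · exact Or.inl (hU'sub h')
          · exact Or.inr ⟨h'.1, fun hxW => h'.2 (hWW' hxW)⟩
    by_cases hRab : Rl G a b <;> by_cases hRba : Rl G b a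
    · -- 2-cycle
      refine finish [a, b] W (altCycle_pair G hab hRab hRba) ?_ ?_ ?_ hWS subset_rfl (by omega)
      · ext c
        simp only [List.toFinset_cons, List.toFinset_nil, insert_empty_eq, mem_inter,
          mem_insert, mem_singleton]
        constructor
        · tauto
        · rintro (rfl | rfl)
          · exact ⟨Or.inl rfl, haS⟩
          · exact ⟨Or.inr rfl, hbS⟩
      · intro x hx
        rcases List.mem_cons.1 hx with rfl | hx
        · exact Or.inl ha
        · rcases List.mem_cons.1 hx with rfl | hx
          · exact Or.inl hb
          · simp at hx
      · intro x hx
        rcases List.mem_cons.1 hx with rfl | hx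
        · exact Or.inl rfl
        · rcases List.mem_cons.1 hx with rfl | hx
          · exact Or.inr (Or.inl rfl)
          · simp at hx
    · -- a -> b only : 3-cycle [a, b, w] with w in pool(b,a)
      have hne : (F'.filter fun w => Rl G b w ∧ Rl G w a).Nonempty :=
        card_pos.1 (by omega)
      obtain ⟨w, hw⟩ := hne
      rw [mem_filter] at hw
      obtain ⟨hwF', hRbw, hRwa⟩ := hw
      have hwS : w ∉ S := hF'S w hwF'
      have hwW : w ∉ W := hF'W w hwF'
      have haw : a ≠ w := fun h => hwS (h ▸ haS)
      have hbw : b ≠ w := fun h => hwS (h ▸ hbS)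
      refine finish [a, b, w] (insert w W) (altCycle_tri G hab haw hbw hRab hRbw hRwa) ?_ ?_ ?_
        ?_ (subset_insert _ _) ?_
      · ext c
        simp only [List.toFinset_cons, List.toFinset_nil, insert_empty_eq, mem_inter,
          mem_insert, mem_singleton]
        constructor
        · rintro ⟨rfl | rfl | rfl, hcS⟩
          · exact Or.inl rfl
          · exact Or.inr rfl
          · exact absurd hcS hwS
        · rintro (rfl | rfl)
          · exact ⟨Or.inl rfl, haS⟩
          · exact ⟨Or.inr (Or.inl rfl), hbS⟩
      · intro x hx
        rcases List.mem_cons.1 hx with rfl | hx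
        · exact Or.inl ha
        · rcases List.mem_cons.1 hx with rfl | hx
          · exact Or.inl hb
          · rcases List.mem_cons.1 hx with rfl | hx
            · exact Or.inr ⟨hwS, hwW⟩
            · simp at hx
      · intro x hx
        rcases List.mem_cons.1 hx with rfl | hx
        · exact Or.inl rfl
        · rcases List.mem_cons.1 hx with rfl | hx
          · exact Or.inr (Or.inl rfl)
          · rcases List.mem_cons.1 hx with rfl | hx
            · exact Or.inr (Or.inr ⟨hwS, mem_insert_self _ _⟩)
            · simp at hx
      · intro v hv
        rcases mem_insert.1 hv with rfl | hv
        · exact hwS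
        · exact hWS v hv
      · rw [card_insert_of_notMem hwW]
        omega
    · -- b -> a only : 3-cycle [b, a, w] with w in pool(a,b)
      have hne : (F'.filter fun w => Rl G a w ∧ Rl G w b).Nonempty :=
        card_pos.1 (by omega)
      obtain ⟨w, hw⟩ := hne
      rw [mem_filter] at hw
      obtain ⟨hwF', hRaw, hRwb⟩ := hw
      have hwS : w ∉ S := hF'S w hwF'
      have hwW : w ∉ W := hF'W w hwF'
      have haw : a ≠ w := fun h => hwS (h ▸ haS)
      have hbw : b ≠ w := fun h => hwS (h ▸ hbS)
      refine finish [b, a, w] (insert w W)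
        (altCycle_tri G hab.symm hbw haw hRba hRaw hRwb) ?_ ?_ ?_ ?_ (subset_insert _ _) ?_
      · ext c
        simp only [List.toFinset_cons, List.toFinset_nil, insert_empty_eq, mem_inter,
          mem_insert, mem_singleton]
        constructor
        · rintro ⟨rfl | rfl | rfl, hcS⟩
          · exact Or.inr rfl
          · exact Or.inl rfl
          · exact absurd hcS hwS
        · rintro (rfl | rfl)
          · exact ⟨Or.inr (Or.inl rfl), haS⟩
          · exact ⟨Or.inl rfl, hbS⟩
      · intro x hx
        rcases List.mem_cons.1 hx with rfl | hx
        · exact Or.inl hb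
        · rcases List.mem_cons.1 hx with rfl | hx
          · exact Or.inl ha
          · rcases List.mem_cons.1 hx with rfl | hx
            · exact Or.inr ⟨hwS, hwW⟩
            · simp at hx
      · intro x hx
        rcases List.mem_cons.1 hx with rfl | hx
        · exact Or.inr (Or.inl rfl)
        · rcases List.mem_cons.1 hx with rfl | hx
          · exact Or.inl rfl
          · rcases List.mem_cons.1 hx with rfl | hx
            · exact Or.inr (Or.inr ⟨hwS, mem_insert_self _ _⟩)
            · simp at hx
      · intro v hv
        rcases mem_insert.1 hv with rfl | hv
        · exact hwS
        · exact hWS v hv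
      · rw [card_insert_of_notMem hwW]
        omega
    · -- no edges: 4-cycle [a, w, b, w'] with w in pool(a,b), w' in pool(b,a)
      have h1 := hpool'_ab hRab hRba
      have h2 := hpool'_ba hRab hRba
      have hne' : (F'.filter fun w => Rl G b w ∧ Rl G w a).Nonempty :=
        card_pos.1 (by omega)
      obtain ⟨w', hw'⟩ := hne'
      rw [mem_filter] at hw'
      obtain ⟨hw'F', hRbw', hRw'a⟩ := hw'
      have hne : ((F'.filter fun w => Rl G a w ∧ Rl G w b).erase w').Nonempty := by
        apply card_pos.1
        have := Finset.pred_card_le_card_erase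
          (s := F'.filter fun w => Rl G a w ∧ Rl G w b) (a := w')
        omega
      obtain ⟨w, hw⟩ := hne
      have hww' : w ≠ w' := (mem_erase.1 hw).1
      have hw2 := (mem_erase.1 hw).2
      rw [mem_filter] at hw2
      obtain ⟨hwF', hRaw, hRwb⟩ := hw2
      have hwS : w ∉ S := hF'S w hwF'
      have hwW : w ∉ W := hF'W w hwF'
      have hw'S : w' ∉ S := hF'S w' hw'F'
      have hw'W : w' ∉ W := hF'W w' hw'F'
      have haw : a ≠ w := fun h => hwS (h ▸ haS)
      have hbw : b ≠ w := fun h => hwS (h ▸ hbS)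
      have haw' : a ≠ w' := fun h => hw'S (h ▸ haS)
      have hbw' : b ≠ w' := fun h => hw'S (h ▸ hbS)
      refine finish [a, w, b, w'] (insert w (insert w' W))
        (altCycle_quad G hab haw haw' hbw hbw' hww' hRaw hRwb hRbw' hRw'a) ?_ ?_ ?_ ?_ ?_ ?_
      · ext c
        simp only [List.toFinset_cons, List.toFinset_nil, insert_empty_eq, mem_inter,
          mem_insert, mem_singleton]
        constructor
        · rintro ⟨rfl | rfl | rfl | rfl, hcS⟩
          · exact Or.inl rfl
          · exact absurd hcS hwS
          · exact Or.inr rfl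
          · exact absurd hcS hw'S
        · rintro (rfl | rfl)
          · exact ⟨Or.inl rfl, haS⟩
          · exact ⟨Or.inr (Or.inr (Or.inl rfl)), hbS⟩
      · intro x hx
        rcases List.mem_cons.1 hx with rfl | hx
        · exact Or.inl ha
        · rcases List.mem_cons.1 hx with rfl | hx
          · exact Or.inr ⟨hwS, hwW⟩
          · rcases List.mem_cons.1 hx with rfl | hx
            · exact Or.inl hb
            · rcases List.mem_cons.1 hx with rfl | hx
              · exact Or.inr ⟨hw'S, hw'W⟩
              · simp at hx
      · intro x hx
        rcases List.mem_cons.1 hx with rfl | hx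
        · exact Or.inl rfl
        · rcases List.mem_cons.1 hx with rfl | hx
          · exact Or.inr (Or.inr ⟨hwS, mem_insert_self _ _⟩)
          · rcases List.mem_cons.1 hx with rfl | hx
            · exact Or.inr (Or.inl rfl)
            · rcases List.mem_cons.1 hx with rfl | hx
              · exact Or.inr (Or.inr ⟨hw'S, mem_insert_of_mem (mem_insert_self _ _)⟩)
              · simp at hx
      · intro v hv
        rcases mem_insert.1 hv with rfl | hv
        · exact hwS
        · rcases mem_insert.1 hv with rfl | hv
          · exact hw'S
          · exact hWS v hv
      · exact (subset_insert _ _).trans (subset_insert _ _)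
      · have hcw : w ∉ insert w' W := by
          intro h
          rcases mem_insert.1 h with h | h
          · exact hww' h
          · exact hwW h
        rw [card_insert_of_notMem hcw, card_insert_of_notMem hw'W]
        omega

end Stage2Aux

/-- **Claim 3.** If every endpoint of an edge of `M₀` (indexed by `S`) has degree at
least `(3n+1)/4` in the balanced bipartite graph `G` with perfect matching
`M = {xᵢyᵢ}`, then `G` contains `⌊|M₀|/2⌋` pairwise vertex-disjoint feasible cycles,
each containing exactly two edges of `M₀`. -/
theorem stmt10 (n : ℕ) (G : SimpleGraph (Fin n ⊕ Fin n))
    (hX : ∀ i j : Fin n, ¬ G.Adj (Sum.inl i) (Sum.inl j))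
    (hY : ∀ i j : Fin n, ¬ G.Adj (Sum.inr i) (Sum.inr j))
    (hM : ∀ i : Fin n, G.Adj (Sum.inl i) (Sum.inr i))
    (S : Finset (Fin n))
    (hdeg : ∀ i ∈ S,
      (3 * (n : ℚ) + 1) / 4 ≤ ((G.neighborSet (Sum.inl i)).ncard : ℚ) ∧
      (3 * (n : ℚ) + 1) / 4 ≤ ((G.neighborSet (Sum.inr i)).ncard : ℚ)) :
    ∃ c : Fin (S.card / 2) → List (Fin n),
      (∀ i, AltCycle G (c i)) ∧
      (∀ i j, i ≠ j → ∀ a ∈ c i, a ∉ c j) ∧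
      (∀ i, ((c i).toFinset ∩ S).card = 2) := by
  classical
  -- reflexivity of the auxiliary digraph relation
  have hRrefl : ∀ a : Fin n, Rl G a a := fun a => (hM a).symm
  -- degree facts
  have hdegOut : ∀ a ∈ S, 4 * (Finset.univ.filter fun c => ¬ Rl G a c).card + 1 ≤ n := by
    intro a haS
    have h1 := deg_out G hY a (hdeg a haS).2
    have h2 := Finset.card_filter_add_card_filter_not
      (s := (Finset.univ : Finset (Fin n))) (p := fun c => Rl G a c)
    rw [Finset.card_univ, Fintype.card_fin] at h2
    have : (Finset.univ.filter fun c => G.Adj (Sum.inr a) (Sum.inl c)) =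
        (Finset.univ.filter fun c => Rl G a c) := rfl
    rw [this] at h1
    omega
  have hdegIn : ∀ a ∈ S, 4 * (Finset.univ.filter fun c => ¬ Rl G c a).card + 1 ≤ n := by
    intro a haS
    have h1 := deg_in G hX a (hdeg a haS).1
    have h2 := Finset.card_filter_add_card_filter_not
      (s := (Finset.univ : Finset (Fin n))) (p := fun c => Rl G c a)
    rw [Finset.card_univ, Fintype.card_fin] at h2
    have : (Finset.univ.filter fun c => G.Adj (Sum.inr c) (Sum.inl a)) =
        (Finset.univ.filter fun c => Rl G c a) := rfl
    rw [this] at h1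
    omega
  -- stage 1: maximum mutual-pair system
  obtain ⟨M, hMsys, hMfacts⟩ := stage1 (Rl G) S hRrefl
  set U : Finset (Fin n) := S \ msup M with hUdef
  have hsupS : msup M ⊆ S := msup_subset (Rl G) S hMsys
  have hsupcard : (msup M).card = 2 * M.card := card_msup (Rl G) S hMsys
  have hsupcard' : (msup M).card ≤ S.card := Finset.card_le_card hsupS
  have hUcard : U.card = S.card - (msup M).card := Finset.card_sdiff_of_subset hsupS
  have hUS : U ⊆ S := Finset.sdiff_subset
  -- stage 2
  obtain ⟨L2, hL2len, hL2AC, hL2S2, hL2pw, hL2mem⟩ :=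
    stage2 G S hdegOut hdegIn U.card U.card U ∅ le_rfl hUS (by simp)
      (fun a ha b hb hab => by
        have := (hMfacts a ha b hb hab).1
        omega)
      (fun a ha b hb hab h1 h2 => by
        have := (hMfacts a ha b hb hab).2 h1 h2
        omega)
      (by simp)
  -- matched 2-cycles
  set LM : List (List (Fin n)) := M.toList.map (fun p => [p.1, p.2]) with hLMdef
  have hLMshape : ∀ l ∈ LM, ∃ p ∈ M, l = [p.1, p.2] := by
    intro l hl
    rw [hLMdef, List.mem_map] at hl
    obtain ⟨p, hp, rfl⟩ := hl
    exact ⟨p, Finset.mem_toList.1 hp, rfl⟩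
  have hLMAC : ∀ l ∈ LM, AltCycle G l := by
    intro l hl
    obtain ⟨p, hp, rfl⟩ := hLMshape l hl
    obtain ⟨h1, h2, h3, h4, h5⟩ := hMsys.1 p hp
    exact altCycle_pair G h5 h3 h4
  have hLMS2 : ∀ l ∈ LM, (l.toFinset ∩ S).card = 2 := by
    intro l hl
    obtain ⟨p, hp, rfl⟩ := hLMshape l hl
    obtain ⟨h1, h2, h3, h4, h5⟩ := hMsys.1 p hp
    have : ([p.1, p.2].toFinset ∩ S) = {p.1, p.2} := by
      ext c
      simp only [List.toFinset_cons, List.toFinset_nil, insert_empty_eq, Finset.mem_inter,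
        Finset.mem_insert, Finset.mem_singleton]
      constructor
      · tauto
      · rintro (rfl | rfl)
        · exact ⟨Or.inl rfl, h1⟩
        · exact ⟨Or.inr rfl, h2⟩
    rw [this]
    exact Finset.card_pair h5
  have hLMpw : List.Pairwise (fun l1 l2 => ∀ x ∈ l1, x ∉ l2) LM := by
    rw [hLMdef]
    apply List.Pairwise.map
      (R := fun p r : Fin n × Fin n => p ≠ r ∧ p ∈ M ∧ r ∈ M)
      (S := fun l1 l2 => ∀ x ∈ l1, x ∉ l2)
    · intro p r ⟨hpr, hp, hr⟩
      obtain ⟨q1, q2, q3, q4⟩ := hMsys.2 p hp r hr hpr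
      intro x hx hx'
      simp only [List.mem_cons, List.not_mem_nil, or_false] at hx hx'
      rcases hx with rfl | rfl <;> rcases hx' with h | h <;> simp_all
    · have hnd := Finset.nodup_toList M
      refine List.Pairwise.imp_of_mem ?_ hnd
      intro p r hp hr hpr
      exact ⟨hpr, Finset.mem_toList.1 hp, Finset.mem_toList.1 hr⟩
  have hcross : ∀ l1 ∈ LM, ∀ l2 ∈ L2, ∀ x ∈ l1, x ∉ l2 := by
    intro l1 hl1 l2 hl2 x hx hx2
    obtain ⟨p, hp, rfl⟩ := hLMshape l1 hl1
    have hxsup : x ∈ msup M := by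
      simp only [List.mem_cons, List.not_mem_nil, or_false] at hx
      exact mem_msup.2 ⟨p, hp, hx⟩
    rcases hL2mem l2 hl2 x hx2 with h | h
    · rw [hUdef, Finset.mem_sdiff] at h
      exact h.2 hxsup
    · exact h.1 (hsupS hxsup)
  set LL : List (List (Fin n)) := LM ++ L2 with hLLdef
  have hLLlen : LL.length = S.card / 2 := by
    rw [hLLdef, List.length_append, hL2len]
    have : LM.length = M.card := by
      rw [hLMdef, List.length_map, Finset.length_toList]
    rw [this]
    omega
  have hLLAC : ∀ l ∈ LL, AltCycle G l := by
    intro l hl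
    rcases List.mem_append.1 hl with h | h
    · exact hLMAC l h
    · exact hL2AC l h
  have hLLS2 : ∀ l ∈ LL, (l.toFinset ∩ S).card = 2 := by
    intro l hl
    rcases List.mem_append.1 hl with h | h
    · exact hLMS2 l h
    · exact hL2S2 l h
  have hLLpw : List.Pairwise (fun l1 l2 => ∀ x ∈ l1, x ∉ l2) LL := by
    rw [hLLdef, List.pairwise_append]
    exact ⟨hLMpw, hL2pw, fun l1 h1 l2 h2 => hcross l1 h1 l2 h2⟩
  refine ⟨fun i => LL.get (Fin.cast hLLlen.symm i), ?_, ?_, ?_⟩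
  · intro i
    exact hLLAC _ (List.get_mem LL _)
  · intro i j hij x hxi hxj
    have hne : (Fin.cast hLLlen.symm i) ≠ (Fin.cast hLLlen.symm j) := by
      intro h
      apply hij
      have h' : ((Fin.cast hLLlen.symm i) : ℕ) = ((Fin.cast hLLlen.symm j) : ℕ) :=
        congrArg Fin.val h
      exact Fin.ext h'
    have hpw := (List.pairwise_iff_get).1 hLLpw
    rcases lt_or_gt_of_ne hne with h | h
    · exact hpw _ _ h x hxi hxj
    · exact hpw _ _ h x hxj hxi
  · intro i
    exact hLLS2 _ (List.get_mem LL _)
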